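/- Let $\epsilon > 0$ and $\alpha \in (1,2]$. Let $h:\mathcal S\times\mathcal X\to\mathbb Z_q^m$ be 2-universal, let $X$ be a random variable on $\mathcal X$, $S$ uniform on $\mathcal S$ independent of $X$, $U$ uniform on $\mathbb Z_q^m$. If $m \le H_\alpha(X) - \frac{1}{\alpha-1}\log_q\big(\frac{1}{\epsilon(\alpha-1)\ln q}\big)$, then $D_\alpha(P_{(h(S,X),S)}\|P_U\times P_S) \le \epsilon$. -/

import Mathlib

open Finset

/-- Joint pmf of the pair `(h(S,X), S)` where `S` is uniform on `𝒮` and `X ~ P` is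
independent of `S`. -/
noncomputable def jointPMF {S X : Type*} [Fintype S] [Fintype X] {q m : ℕ}
    (h : S → X → (Fin m → Fin q)) (P : X → ℝ) : (Fin m → Fin q) × S → ℝ :=
  fun p => (Fintype.card S : ℝ)⁻¹ * ∑ x : X, if h p.2 x = p.1 then P x else 0

/-- Rényi divergence of order `α > 1` (base-`q` logarithm). -/
noncomputable def renyiD {Z : Type*} [Fintype Z] (q : ℕ) (α : ℝ) (P Q : Z → ℝ) : ℝ :=
  (α - 1)⁻¹ * Real.logb q (∑ z, P z ^ α * Q z ^ (1 - α))

/-- Rényi entropy of order `α > 1` (base-`q` logarithm). -/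
noncomputable def renyiH {X : Type*} [Fintype X] (q : ℕ) (α : ℝ) (P : X → ℝ) : ℝ :=
  (1 - α)⁻¹ * Real.logb q (∑ x, P x ^ α)

lemma aux_rpow_add_le {a b p : ℝ} (ha : 0 ≤ a) (hb : 0 ≤ b) (hp0 : 0 ≤ p) (hp1 : p ≤ 1) :
    (a + b) ^ p ≤ a ^ p + b ^ p := by
  have h := NNReal.rpow_add_le_add_rpow (⟨a, ha⟩ : NNReal) (⟨b, hb⟩ : NNReal) hp0 hp1
  have h2 := NNReal.coe_le_coe.2 h
  push_cast at h2
  exact h2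

lemma aux_jensen {ι : Type*} [Fintype ι] {β : ℝ} (hβ0 : 0 < β) (hβ1 : β ≤ 1)
    (f : ι → ℝ) (hf : ∀ i, 0 ≤ f i) :
    ∑ i, f i ^ β ≤ (Fintype.card ι : ℝ) ^ (1 - β) * (∑ i, f i) ^ β := by
  have hp : 1 ≤ β⁻¹ := one_le_inv_iff₀.2 ⟨hβ0, hβ1⟩
  have h := Real.inner_le_weight_mul_Lp_of_nonneg univ hp (fun _ => (1:ℝ))
    (fun i => f i ^ β) (fun _ => zero_le_one) (fun i => Real.rpow_nonneg (hf i) β)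
  simp only [one_mul, inv_inv] at h
  have key : ∀ i : ι, (f i ^ β) ^ β⁻¹ = f i := fun i => by
    rw [← Real.rpow_mul (hf i), mul_inv_cancel₀ hβ0.ne', Real.rpow_one]
  simp only [key, sum_const, card_univ, nsmul_eq_mul, mul_one] at h
  exact h

/-- Corollary 3.5: for a 2-universal hash function and `α ∈ (1,2]`, if
`m ≤ H_α(X) - (α-1)⁻¹ log_q(1/(ε(α-1)ln q))` then `D_α(P_{(h(S,X),S)} ‖ P_U × P_S) ≤ ε`. -/
theorem lhl_fractional_order {S X : Type*} [Fintype S] [Fintype X] [Nonempty S] [Nonempty X]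
    (q m : ℕ) (hq : 2 ≤ q) (hm : 1 ≤ m)
    (α : ℝ) (hα1 : 1 < α) (hα2 : α ≤ 2) (ε : ℝ) (hε : 0 < ε)
    (h : S → X → (Fin m → Fin q)) (P : X → ℝ)
    (hP0 : ∀ x, 0 ≤ P x) (hP1 : ∑ x, P x = 1)
    (hUniv : ∀ x₁ x₂ : X, x₁ ≠ x₂ →
      ((univ.filter fun s : S => h s x₁ = h s x₂).card : ℝ) / (Fintype.card S : ℝ)
        ≤ ((q : ℝ) ^ m)⁻¹)
    (hmH : (m : ℝ) ≤ renyiH q α P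
        - (α - 1)⁻¹ * Real.logb q (1 / (ε * (α - 1) * Real.log q))) :
    renyiD q α (jointPMF h P) (fun _ => ((q : ℝ) ^ m)⁻¹ * (Fintype.card S : ℝ)⁻¹) ≤ ε := by
  classical
  set β : ℝ := α - 1 with hβdef
  have hβ0 : 0 < β := by rw [hβdef]; linarith
  have hβ1 : β ≤ 1 := by rw [hβdef]; linarith
  have hq1 : (1:ℝ) < (q:ℝ) := by exact_mod_cast lt_of_lt_of_le one_lt_two (by exact_mod_cast hq)
  have hq0 : (0:ℝ) < (q:ℝ) := by linarith
  have hlogq : 0 < Real.log q := Real.log_pos hq1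
  set N : ℝ := (Fintype.card S : ℝ) with hNdef
  have hN : 0 < N := by
    rw [hNdef]; exact_mod_cast Fintype.card_pos
  set c : ℝ := ((q:ℝ) ^ m) with hcdef
  have hc : 0 < c := pow_pos hq0 m
  set A : (Fin m → Fin q) → S → ℝ := fun u s => ∑ x : X, if h s x = u then P x else 0 with hAdef
  have hA0 : ∀ u s, 0 ≤ A u s := fun u s =>
    Finset.sum_nonneg fun x _ => by split <;> simp [hP0 x]
  set T : ℝ := ∑ x : X, P x ^ α with hTdef
  have hT0' : ∀ x, 0 ≤ P x ^ α := fun x => Real.rpow_nonneg (hP0 x) α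
  have hex : ∃ x : X, 0 < P x := by
    by_contra hcon
    push_neg at hcon
    have h0 : ∑ x : X, P x = 0 :=
      Finset.sum_eq_zero fun x _ => le_antisymm (hcon x) (hP0 x)
    rw [hP1] at h0; norm_num at h0
  obtain ⟨x₀, hx₀⟩ := hex
  have hT0 : 0 < T := by
    rw [hTdef]
    exact lt_of_lt_of_le (Real.rpow_pos_of_pos hx₀ α)
      (Finset.single_le_sum (fun x _ => hT0' x) (mem_univ x₀))
  set Q : ℝ := c⁻¹ * N⁻¹ with hQdef
  have hQ0 : 0 < Q := by rw [hQdef]; positivity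
  have hcβ : 0 < c ^ β := Real.rpow_pos_of_pos hc β
  -- splitting of rpow at exponent α = β + 1
  have hsplit : ∀ a : ℝ, 0 ≤ a → a ^ α = a ^ β * a := by
    intro a ha
    rcases eq_or_lt_of_le ha with h0 | h0
    · rw [← h0, Real.zero_rpow (by linarith : α ≠ 0), mul_zero]
    · conv_lhs => rw [show α = β + 1 by rw [hβdef]; ring]
      rw [Real.rpow_add h0, Real.rpow_one]
  -- Step 1: rewrite the divergence sum
  have step1 : ∑ z : (Fin m → Fin q) × S, jointPMF h P z ^ α * Q ^ (1 - α)
      = c ^ β * N⁻¹ * ∑ z : (Fin m → Fin q) × S, A z.1 z.2 ^ α := by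
    rw [Finset.mul_sum]
    apply Finset.sum_congr rfl
    intro z _
    have h1 : jointPMF h P z = N⁻¹ * A z.1 z.2 := rfl
    have e1 : (N ^ α)⁻¹ * (N ^ (1 - α))⁻¹ = N⁻¹ := by
      rw [← mul_inv, ← Real.rpow_add hN, show α + (1 - α) = 1 by ring, Real.rpow_one]
    have e2 : (c ^ (1 - α))⁻¹ = c ^ β := by
      rw [← Real.rpow_neg hc.le, show -(1 - α) = β by rw [hβdef]; ring]
    rw [h1, hQdef, Real.mul_rpow (by positivity) (hA0 _ _),
        Real.mul_rpow (by positivity) (by positivity),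
        Real.inv_rpow hN.le, Real.inv_rpow hc.le, Real.inv_rpow hN.le, e2, ← e1]
    ring
  -- Step 2: key hashing bound
  have step2 : ∑ z : (Fin m → Fin q) × S, A z.1 z.2 ^ α ≤ N * (T + (c ^ β)⁻¹) := by
    have B1 : ∀ s : S, ∑ u : Fin m → Fin q, A u s ^ α = ∑ x : X, P x * A (h s x) s ^ β := by
      intro s
      have e : ∀ u, A u s ^ α = ∑ x : X, (if h s x = u then P x * A u s ^ β else 0) := by
        intro u
        rw [hsplit (A u s) (hA0 u s), mul_comm]
        conv_lhs => rw [hAdef]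
        rw [Finset.sum_mul]
        exact Finset.sum_congr rfl fun x _ => by rw [ite_mul, zero_mul]
      calc ∑ u, A u s ^ α
          = ∑ u, ∑ x : X, (if h s x = u then P x * A u s ^ β else 0) :=
            Finset.sum_congr rfl fun u _ => e u
        _ = ∑ x : X, ∑ u, (if h s x = u then P x * A u s ^ β else 0) := Finset.sum_comm
        _ = ∑ x : X, P x * A (h s x) s ^ β := by
            apply Finset.sum_congr rfl
            intro x _
            rw [Finset.sum_ite_eq univ (h s x) (fun u => P x * A u s ^ β)]
            simp
    have perx : ∀ x : X, ∑ s : S, P x * A (h s x) s ^ β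
        ≤ N * P x ^ α + P x * (N * (c ^ β)⁻¹) := by
      intro x
      set Bx : S → ℝ := fun s => ∑ x' ∈ univ.erase x, if h s x' = h s x then P x' else 0
        with hBxdef
      have hBx0 : ∀ s, 0 ≤ Bx s := fun s =>
        Finset.sum_nonneg fun x' _ => by split <;> simp [hP0 x']
      have hAx : ∀ s, A (h s x) s = P x + Bx s := by
        intro s
        simp only [hAdef, hBxdef]
        rw [← Finset.add_sum_erase univ (fun x' => if h s x' = h s x then P x' else 0)
          (mem_univ x), if_pos rfl]
      have hsum : ∑ s : S, Bx s ≤ N * c⁻¹ := by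
        calc ∑ s : S, Bx s
            = ∑ x' ∈ univ.erase x,
                ((univ.filter fun s : S => h s x' = h s x).card : ℝ) * P x' := by
              rw [hBxdef, Finset.sum_comm]
              apply Finset.sum_congr rfl
              intro x' _
              rw [← Finset.sum_filter, Finset.sum_const, nsmul_eq_mul]
          _ ≤ ∑ x' ∈ univ.erase x, (N * c⁻¹) * P x' := by
              apply Finset.sum_le_sum
              intro x' hx'
              apply mul_le_mul_of_nonneg_right _ (hP0 x')
              have hu := hUniv x' x (Finset.ne_of_mem_erase hx')
              rw [div_le_iff₀ hN] at hu
              calc ((univ.filter fun s : S => h s x' = h s x).card : ℝ)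
                  ≤ c⁻¹ * N := hu
                _ = N * c⁻¹ := by ring
          _ = (N * c⁻¹) * ∑ x' ∈ univ.erase x, P x' := by rw [Finset.mul_sum]
          _ ≤ (N * c⁻¹) * 1 := by
              apply mul_le_mul_of_nonneg_left _ (by positivity)
              rw [← hP1]
              exact Finset.sum_le_sum_of_subset_of_nonneg (Finset.subset_univ _)
                (fun x' _ _ => hP0 x')
          _ = N * c⁻¹ := mul_one _
      have hjens : ∑ s : S, Bx s ^ β ≤ N * (c ^ β)⁻¹ := by
        calc ∑ s : S, Bx s ^ β
            ≤ N ^ (1 - β) * (∑ s : S, Bx s) ^ β := by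
              have := aux_jensen hβ0 hβ1 Bx hBx0
              rwa [← hNdef] at this
          _ ≤ N ^ (1 - β) * (N * c⁻¹) ^ β := by
              apply mul_le_mul_of_nonneg_left
                (Real.rpow_le_rpow (Finset.sum_nonneg fun s _ => hBx0 s) hsum hβ0.le)
                (by positivity)
          _ = N * (c ^ β)⁻¹ := by
              rw [Real.mul_rpow hN.le (by positivity), Real.inv_rpow hc.le, ← mul_assoc,
                ← Real.rpow_add hN, show (1:ℝ) - β + β = 1 by ring, Real.rpow_one]
      calc ∑ s : S, P x * A (h s x) s ^ β
          = P x * ∑ s : S, (P x + Bx s) ^ β := by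
            rw [Finset.mul_sum]
            exact Finset.sum_congr rfl fun s _ => by rw [hAx s]
        _ ≤ P x * ∑ s : S, (P x ^ β + Bx s ^ β) := by
            apply mul_le_mul_of_nonneg_left _ (hP0 x)
            exact Finset.sum_le_sum fun s _ =>
              aux_rpow_add_le (hP0 x) (hBx0 s) hβ0.le hβ1
        _ = P x * (N * P x ^ β + ∑ s : S, Bx s ^ β) := by
            rw [Finset.sum_add_distrib, Finset.sum_const, card_univ, nsmul_eq_mul, ← hNdef]
        _ ≤ P x * (N * P x ^ β + N * (c ^ β)⁻¹) := by
            apply mul_le_mul_of_nonneg_left _ (hP0 x)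
            linarith [hjens]
        _ = N * (P x ^ β * P x) + P x * (N * (c ^ β)⁻¹) := by ring
        _ = N * P x ^ α + P x * (N * (c ^ β)⁻¹) := by
            rw [← hsplit (P x) (hP0 x)]
    calc ∑ z : (Fin m → Fin q) × S, A z.1 z.2 ^ α
        = ∑ u : Fin m → Fin q, ∑ s : S, A u s ^ α := Fintype.sum_prod_type _
      _ = ∑ s : S, ∑ u : Fin m → Fin q, A u s ^ α := Finset.sum_comm
      _ = ∑ s : S, ∑ x : X, P x * A (h s x) s ^ β := Finset.sum_congr rfl fun s _ => B1 s
      _ = ∑ x : X, ∑ s : S, P x * A (h s x) s ^ β := Finset.sum_comm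
      _ ≤ ∑ x : X, (N * P x ^ α + P x * (N * (c ^ β)⁻¹)) :=
          Finset.sum_le_sum fun x _ => perx x
      _ = N * T + (N * (c ^ β)⁻¹) := by
          rw [Finset.sum_add_distrib, ← Finset.mul_sum, ← hTdef, ← Finset.sum_mul, hP1, one_mul]
      _ = N * (T + (c ^ β)⁻¹) := by ring
  -- Step 3: combine
  have step3 : ∑ z : (Fin m → Fin q) × S, jointPMF h P z ^ α * Q ^ (1 - α)
      ≤ 1 + c ^ β * T := by
    calc ∑ z : (Fin m → Fin q) × S, jointPMF h P z ^ α * Q ^ (1 - α)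
        = c ^ β * N⁻¹ * ∑ z : (Fin m → Fin q) × S, A z.1 z.2 ^ α := step1
      _ ≤ c ^ β * N⁻¹ * (N * (T + (c ^ β)⁻¹)) :=
          mul_le_mul_of_nonneg_left step2 (by positivity)
      _ = 1 + c ^ β * T := by field_simp; ring
  -- Step 4: positivity
  have step4 : 0 < ∑ z : (Fin m → Fin q) × S, jointPMF h P z ^ α * Q ^ (1 - α) := by
    have hjnonneg : ∀ z : (Fin m → Fin q) × S, 0 ≤ jointPMF h P z := by
      intro z
      apply mul_nonneg (by positivity)
      exact Finset.sum_nonneg fun x _ => by split <;> simp [hP0 x]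
    set s₀ : S := Classical.arbitrary S
    have hz : 0 < jointPMF h P (h s₀ x₀, s₀) := by
      have hle : P x₀ ≤ ∑ x : X, if h s₀ x = h s₀ x₀ then P x else 0 := by
        have := Finset.single_le_sum
          (f := fun x => if h s₀ x = h s₀ x₀ then P x else 0)
          (fun x _ => by split <;> simp [hP0 x]) (mem_univ x₀)
        simpa using this
      have : (0:ℝ) < N⁻¹ * ∑ x : X, if h s₀ x = h s₀ x₀ then P x else 0 := by
        apply mul_pos (by positivity) (lt_of_lt_of_le hx₀ hle)
      exact this
    apply Finset.sum_pos'
    · intro z _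
      exact mul_nonneg (Real.rpow_nonneg (hjnonneg z) α) (Real.rpow_nonneg hQ0.le _)
    · exact ⟨(h s₀ x₀, s₀), mem_univ _,
        mul_pos (Real.rpow_pos_of_pos hz α) (Real.rpow_pos_of_pos hQ0 _)⟩
  -- Step 5: from the entropy condition
  have step5 : c ^ β * T ≤ ε * β * Real.log q := by
    have hεβ : 0 < ε * β * Real.log q := by positivity
    have hH : renyiH q α P = -β⁻¹ * Real.logb q T := by
      rw [renyiH, ← hTdef]
      congr 1
      rw [show (1:ℝ) - α = -β by rw [hβdef]; ring, inv_neg]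
    have h1 : β * (m:ℝ) ≤ -Real.logb q T + Real.logb q (ε * β * Real.log q) := by
      have h2 := mul_le_mul_of_nonneg_left hmH hβ0.le
      rw [mul_sub, hH] at h2
      rw [one_div, Real.logb_inv] at h2
      have e3 : β * (-β⁻¹ * Real.logb q T) = -Real.logb q T := by
        field_simp
      have e4 : β * (β⁻¹ * -Real.logb q (ε * β * Real.log q))
          = -Real.logb q (ε * β * Real.log q) := by
        field_simp
      rw [e3] at h2
      calc β * (m:ℝ) ≤ -Real.logb q T - β * (β⁻¹ * -Real.logb q (ε * β * Real.log q)) := h2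
        _ = -Real.logb q T + Real.logb q (ε * β * Real.log q) := by rw [e4]; ring
    have hlogc : Real.logb q (c ^ β * T) = β * (m:ℝ) + Real.logb q T := by
      rw [Real.logb_mul (by positivity) hT0.ne', Real.logb_rpow_eq_mul_logb_of_pos hc]
      congr 2
      rw [hcdef, ← Real.rpow_natCast (q:ℝ) m, Real.logb_rpow hq0 (by linarith)]
    have hmono : Real.logb q (c ^ β * T) ≤ Real.logb q (ε * β * Real.log q) := by
      rw [hlogc]; linarith
    exact (Real.logb_le_logb hq1 (by positivity) hεβ).1 hmono
  -- Final assembly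
  simp only [renyiD]
  have hlog : Real.logb q (∑ z : (Fin m → Fin q) × S, jointPMF h P z ^ α * Q ^ (1 - α))
      ≤ ε * β * Real.log q / Real.log q := by
    calc Real.logb q (∑ z : (Fin m → Fin q) × S, jointPMF h P z ^ α * Q ^ (1 - α))
        ≤ Real.logb q (1 + c ^ β * T) := Real.logb_le_logb_of_le hq1 step4 step3
      _ ≤ c ^ β * T / Real.log q := by
          rw [Real.logb]
          gcongr
          have := Real.log_le_sub_one_of_pos (show (0:ℝ) < 1 + c ^ β * T by positivity)
          linarith
      _ ≤ ε * β * Real.log q / Real.log q := by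
          gcongr
  calc β⁻¹ * Real.logb q (∑ z : (Fin m → Fin q) × S, jointPMF h P z ^ α * Q ^ (1 - α))
      ≤ β⁻¹ * (ε * β * Real.log q / Real.log q) :=
        mul_le_mul_of_nonneg_left hlog (by positivity)
    _ = ε := by field_simp
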